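/- Let b : ℕ → ℤ be the sequence with b_j = 0 for j < 0, b₀ = 1, and b_k = 4b_{k-1} - 2b_{k-2} - 3b_{k-3} + 2b_{k-4} for k ≥ 1. Then the formal power series ∑_{k≥0} b_k t^k in ℤ⟦t⟧ satisfies (1 - t)(1 - 3t - t² + 2t³) · (∑_{k≥0} b_k t^k) = 1. -/

import Mathlib

open PowerSeries

theorem stmt_3 (b : ℤ → ℤ) (hneg : ∀ j : ℤ, j < 0 → b j = 0) (h0 : b 0 = 1)
    (hrec : ∀ k : ℤ, 1 ≤ k →
      b k = 4 * b (k - 1) - 2 * b (k - 2) - 3 * b (k - 3) + 2 * b (k - 4)) :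
    ((1 - X) * (1 - 3 * X - X ^ 2 + 2 * X ^ 3) : PowerSeries ℤ) *
      PowerSeries.mk (fun k : ℕ => b (k : ℤ)) = 1 := by
  have key : ∀ n k : ℕ, (coeff n) (X ^ k * PowerSeries.mk fun k : ℕ => b (k : ℤ))
      = b ((n : ℤ) - k) := by
    intro n k
    rw [coeff_X_pow_mul']
    split_ifs with h
    · rw [coeff_mk]; congr 1; omega
    · exact (hneg _ (by omega)).symm
  ext n
  have expand : ((1 - X) * (1 - 3 * X - X ^ 2 + 2 * X ^ 3) : PowerSeries ℤ) *
      PowerSeries.mk (fun k : ℕ => b (k : ℤ))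
      = PowerSeries.mk (fun k : ℕ => b (k : ℤ))
        - C 4 * (X ^ 1 * PowerSeries.mk (fun k : ℕ => b (k : ℤ)))
        + C 2 * (X ^ 2 * PowerSeries.mk (fun k : ℕ => b (k : ℤ)))
        + C 3 * (X ^ 3 * PowerSeries.mk (fun k : ℕ => b (k : ℤ)))
        - C 2 * (X ^ 4 * PowerSeries.mk (fun k : ℕ => b (k : ℤ))) := by
    rw [show (C 4 : PowerSeries ℤ) = 4 from map_ofNat _ 4,
      show (C 2 : PowerSeries ℤ) = 2 from map_ofNat _ 2,
      show (C 3 : PowerSeries ℤ) = 3 from map_ofNat _ 3]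
    ring
  rw [expand, map_sub, map_add, map_add, map_sub, coeff_C_mul, coeff_C_mul, coeff_C_mul,
    coeff_C_mul, key, key, key, key, coeff_mk, coeff_one]
  push_cast
  by_cases hn : n = 0
  · subst hn
    simp only [if_pos rfl]
    norm_num
    rw [h0, hneg (-1) (by norm_num), hneg (-2) (by norm_num), hneg (-3) (by norm_num),
      hneg (-4) (by norm_num)]
    ring
  · rw [if_neg hn, hrec (n : ℤ) (by exact_mod_cast Nat.one_le_iff_ne_zero.2 hn)]
    ring
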